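/- Every reduced spherical convex body on S^d of thickness greater than π/2 is smooth, i.e., at every boundary point there is exactly one supporting hemisphere. -/

import Mathlib

open Set Metric
open scoped RealInnerProductSpace

noncomputable section

/-- Euclidean space `E^{d+1}`. -/
abbrev E (d : ℕ) := EuclideanSpace ℝ (Fin (d + 1))

/-- The unit sphere `S^d ⊆ E^{d+1}`. -/
def Sph (d : ℕ) : Set (E d) := Metric.sphere (0 : E d) 1

variable {d : ℕ}

/-- Geodesic (angular) distance on the unit sphere. -/
def sdist (x y : E d) : ℝ := Real.arccos ⟪x, y⟫

/-- Closed hemisphere with center `p`. -/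
def Hemi (p : E d) : Set (E d) := {x ∈ Sph d | 0 ≤ ⟪p, x⟫}

/-- Open hemisphere with center `p`. -/
def openHemi (p : E d) : Set (E d) := {x ∈ Sph d | 0 < ⟪p, x⟫}

/-- Boundary great subsphere of the hemisphere with center `p`. -/
def bdHemi (p : E d) : Set (E d) := {x ∈ Sph d | ⟪p, x⟫ = 0}

/-- Spherical convexity: no antipodal pairs, and the nonnegative cone over the
set is convex (equivalent to being closed under shorter arcs). -/
def SphConvex (C : Set (E d)) : Prop :=
  (∀ x ∈ C, -x ∉ C) ∧ Convex ℝ {v : E d | ∃ r : ℝ, 0 ≤ r ∧ ∃ x ∈ C, v = r • x}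

/-- Spherical convex hull: the smallest spherically convex subset of the
sphere containing `A`. -/
def sConvHull (A : Set (E d)) : Set (E d) := ⋂₀ {C | SphConvex C ∧ C ⊆ Sph d ∧ A ⊆ C}

/-- Interior of `C` relative to the sphere. -/
def sInterior (C : Set (E d)) : Set (E d) :=
  {x ∈ Sph d | ∃ ε > 0, Metric.ball x ε ∩ Sph d ⊆ C}

/-- A spherical convex body: closed, spherically convex, with nonempty
interior relative to the sphere. -/
def IsBody (C : Set (E d)) : Prop :=
  C ⊆ Sph d ∧ IsClosed C ∧ SphConvex C ∧ (sInterior C).Nonempty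

/-- Spherical ball of radius `r` centered at `p`. -/
def sBall (p : E d) (r : ℝ) : Set (E d) := {x ∈ Sph d | sdist p x ≤ r}

/-- Normalization of a vector. -/
def nrm (v : E d) : E d := ‖v‖⁻¹ • v

/-- The center of the `(d-1)`-dimensional hemisphere `bd(G) ∩ H`, where `G`, `H`
are the hemispheres centered at `g`, `h`. -/
def cGH (g h : E d) : E d := nrm (h - ⟪g, h⟫ • g)

/-- Thickness of the lune `Hemi g ∩ Hemi h`: the geodesic distance between the
centers of its two bounding `(d-1)`-dimensional hemispheres. -/
def lthick (g h : E d) : ℝ := Real.pi - sdist g h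

/-- The hemisphere centered at `k` supports `C`. -/
def Supports (k : E d) (C : Set (E d)) : Prop :=
  C ⊆ Hemi k ∧ (bdHemi k ∩ C).Nonempty

/-- Width of `C` determined by a supporting hemisphere centered at `k`:
minimal thickness of a lune `K ∩ K*` over supporting hemispheres `K* ≠ K`. -/
def width (C : Set (E d)) (k : E d) : ℝ :=
  sInf {w | ∃ k' ∈ Sph d, k' ≠ k ∧ k' ≠ -k ∧ Supports k' C ∧ w = lthick k k'}

/-- Thickness of `C`: minimal thickness of a lune containing `C`. -/
def thick (C : Set (E d)) : ℝ :=
  sInf {w | ∃ g ∈ Sph d, ∃ h ∈ Sph d, g ≠ h ∧ g ≠ -h ∧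
    C ⊆ Hemi g ∩ Hemi h ∧ w = lthick g h}

/-- Spherical diameter of a set. -/
def sdiam (C : Set (E d)) : ℝ := sSup {r | ∃ x ∈ C, ∃ y ∈ C, r = sdist x y}

/-- Reduced spherical convex body. -/
def Reduced (R : Set (E d)) : Prop :=
  IsBody R ∧ ∀ Z : Set (E d), IsBody Z → Z ⊆ R → Z ≠ R → thick Z < thick R

/-- Extreme point of a spherical convex body. -/
def ExtremePt (C : Set (E d)) (e : E d) : Prop := e ∈ C ∧ SphConvex (C \ {e})

/-! ### Auxiliary lemmas -/

section Stmt11Aux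
open Pointwise

variable {d : ℕ}

private lemma mem_Sph_iff_norm {x : E d} : x ∈ Sph d ↔ ‖x‖ = 1 := by
  simp [Sph, mem_sphere_iff_norm]

/-- The nonnegative cone over a set (the set appearing in `SphConvex`). -/
private def coneSet (C : Set (E d)) : Set (E d) :=
  {v : E d | ∃ r : ℝ, 0 ≤ r ∧ ∃ x ∈ C, v = r • x}

private lemma self_mem_coneSet {C : Set (E d)} {x : E d} (hx : x ∈ C) : x ∈ coneSet C :=
  ⟨1, zero_le_one, x, hx, (one_smul ℝ x).symm⟩

private lemma smul_mem_coneSet {C : Set (E d)} {x : E d} (hx : x ∈ C) {r : ℝ} (hr : 0 ≤ r) :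
    r • x ∈ coneSet C := ⟨r, hr, x, hx, rfl⟩

private lemma zero_mem_coneSet {C : Set (E d)} (hC : C.Nonempty) : (0 : E d) ∈ coneSet C := by
  obtain ⟨x, hx⟩ := hC
  exact ⟨0, le_rfl, x, hx, (zero_smul ℝ x).symm⟩

private lemma norm_of_mem_coneSet {C : Set (E d)} (hC : C ⊆ Sph d) {r : ℝ} (hr : 0 ≤ r)
    {x : E d} (hx : x ∈ C) : ‖r • x‖ = r := by
  have hx1 : ‖x‖ = 1 := mem_Sph_iff_norm.1 (hC hx)
  rw [norm_smul, hx1, mul_one, Real.norm_eq_abs, abs_of_nonneg hr]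

private lemma coneSet_inter_Sph {C : Set (E d)} (hC : C ⊆ Sph d) {v : E d}
    (hv : v ∈ coneSet C) (hvS : v ∈ Sph d) : v ∈ C := by
  obtain ⟨r, hr, x, hx, rfl⟩ := hv
  have h1 : ‖r • x‖ = r := norm_of_mem_coneSet hC hr hx
  have h2 : ‖r • x‖ = 1 := mem_Sph_iff_norm.1 hvS
  have : r = 1 := by rw [← h1, h2]
  rw [this, one_smul]
  exact hx

private lemma sInterior_subset_self {C : Set (E d)} : sInterior C ⊆ C := by
  rintro x ⟨hxS, ε, hε, hb⟩
  exact hb ⟨mem_ball_self hε, hxS⟩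

/-- The dual cone of a set. -/
private def dualC (S : Set (E d)) : Set (E d) := {w : E d | ∀ v ∈ S, 0 ≤ ⟪v, w⟫}

private lemma dualC_coe (S : Set (E d)) :
    ((ProperCone.innerDual S : ProperCone ℝ (E d)) : Set (E d)) = dualC S := rfl

private lemma zero_mem_dualC (S : Set (E d)) : (0 : E d) ∈ dualC S := fun v _ => by
  rw [inner_zero_right]

private lemma smul_mem_dualC {S : Set (E d)} {w : E d} (hw : w ∈ dualC S) {r : ℝ} (hr : 0 ≤ r) :
    r • w ∈ dualC S := fun v hv => by
  rw [real_inner_smul_right]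
  exact mul_nonneg hr (hw v hv)

private lemma add_mem_dualC {S : Set (E d)} {w w' : E d} (hw : w ∈ dualC S) (hw' : w' ∈ dualC S) :
    w + w' ∈ dualC S := fun v hv => by
  rw [inner_add_right]
  exact add_nonneg (hw v hv) (hw' v hv)

private lemma dualC_closure (S : Set (E d)) : dualC (closure S) = dualC S := by
  ext w
  constructor
  · intro h v hv
    exact h v (subset_closure hv)
  · intro h v hv
    have hcl : closure S ⊆ {v : E d | 0 ≤ ⟪v, w⟫} :=
      closure_minimal h (isClosed_le continuous_const (continuous_id.inner continuous_const))
    exact hcl hv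

private lemma dualC_dualC (K : ConvexCone ℝ (E d)) (hne : (K : Set (E d)).Nonempty)
    (hc : IsClosed (K : Set (E d))) : dualC (dualC (K : Set (E d))) = K := by
  have h := ProperCone.innerDual_innerDual
    (⟨K.toPointedCone (ConvexCone.Pointed.of_nonempty_of_isClosed hne hc), hc⟩ : ProperCone ℝ (E d))
  calc dualC (dualC (K : Set (E d)))
      = ((ProperCone.innerDual ((ProperCone.innerDual (K : Set (E d)) : ProperCone ℝ (E d)) :
          Set (E d)) : ProperCone ℝ (E d)) : Set (E d)) := by
        rw [dualC_coe, dualC_coe]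
    _ = (K : Set (E d)) := congrArg (fun C : ProperCone ℝ (E d) => (C : Set (E d))) h

private lemma dualC_inter (K₁ K₂ : ConvexCone ℝ (E d))
    (hne₁ : (K₁ : Set (E d)).Nonempty) (hne₂ : (K₂ : Set (E d)).Nonempty)
    (hc₁ : IsClosed (K₁ : Set (E d))) (hc₂ : IsClosed (K₂ : Set (E d))) :
    dualC ((K₁ : Set (E d)) ∩ (K₂ : Set (E d)))
      = closure (dualC (K₁ : Set (E d)) + dualC (K₂ : Set (E d))) := by
  set S₁ := (K₁ : Set (E d))
  set S₂ := (K₂ : Set (E d))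
  set T : Set (E d) := dualC S₁ + dualC S₂ with hT
  have hsub₁ : dualC S₁ ⊆ T := fun a ha => ⟨a, ha, 0, zero_mem_dualC _, add_zero a⟩
  have hsub₂ : dualC S₂ ⊆ T := fun b hb => ⟨0, zero_mem_dualC _, b, hb, zero_add b⟩
  have hdT : dualC T = S₁ ∩ S₂ := by
    ext w
    constructor
    · intro h
      constructor
      · show w ∈ S₁
        rw [show S₁ = (K₁ : Set (E d)) from rfl, ← dualC_dualC K₁ hne₁ hc₁]
        exact fun a ha => h a (hsub₁ ha)
      · show w ∈ S₂
        rw [show S₂ = (K₂ : Set (E d)) from rfl, ← dualC_dualC K₂ hne₂ hc₂]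
        exact fun b hb => h b (hsub₂ hb)
    · rintro ⟨h1, h2⟩ v hv
      obtain ⟨a, ha, b, hb, rfl⟩ := hv
      rw [inner_add_left]
      have hha : 0 ≤ ⟪a, w⟫ := by rw [real_inner_comm]; exact ha w h1
      have hhb : 0 ≤ ⟪b, w⟫ := by rw [real_inner_comm]; exact hb w h2
      exact add_nonneg hha hhb
  -- `T` is a convex cone
  set Tcone : ConvexCone ℝ (E d) :=
    { carrier := T
      smul_mem' := by
        rintro c hc v ⟨a, ha, b, hb, rfl⟩
        exact ⟨c • a, smul_mem_dualC ha hc.le, c • b, smul_mem_dualC hb hc.le,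
          (smul_add c a b).symm⟩
      add_mem' := by
        rintro v ⟨a, ha, b, hb, rfl⟩ v' ⟨a', ha', b', hb', rfl⟩
        exact ⟨a + a', add_mem_dualC ha ha', b + b', add_mem_dualC hb hb', add_add_add_comm a a' b b'⟩ } with hTcone
  have hTc : (Tcone.closure : Set (E d)) = closure T := Tcone.coe_closure
  have hTne : (Tcone.closure : Set (E d)).Nonempty :=
    ⟨0, by rw [hTc]; exact subset_closure ⟨0, zero_mem_dualC _, 0, zero_mem_dualC _, add_zero 0⟩⟩
  have hTcl : IsClosed (Tcone.closure : Set (E d)) := by rw [hTc]; exact isClosed_closure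
  have key : dualC (dualC (closure T)) = closure T := by
    have := dualC_dualC Tcone.closure hTne hTcl
    rwa [hTc] at this
  rw [← hdT, ← key, dualC_closure]

private lemma inner_sInterior_pos {R : Set (E d)} {w x₀ : E d} (hw : ‖w‖ = 1)
    (hA : ∀ x ∈ R, 0 ≤ ⟪w, x⟫) (hx₀ : x₀ ∈ sInterior R) : 0 < ⟪w, x₀⟫ := by
  obtain ⟨hx₀S, ε, hε, hball⟩ := hx₀
  have hx₀n : ‖x₀‖ = 1 := mem_Sph_iff_norm.1 hx₀S
  have hx₀R : x₀ ∈ R := hball ⟨mem_ball_self hε, hx₀S⟩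
  rcases (hA _ hx₀R).lt_or_eq with h | h
  · exact h
  exfalso
  set t : ℝ := min (ε / 3) (1 / 2) with htdef
  have ht0 : 0 < t := lt_min (by linarith) (by norm_num)
  have htε : t ≤ ε / 3 := min_le_left _ _
  have ht1 : t ≤ 1 / 2 := min_le_right _ _
  set u : E d := x₀ - t • w with hudef
  have htw : ‖t • w‖ = t := by
    rw [norm_smul, hw, mul_one, Real.norm_eq_abs, abs_of_nonneg ht0.le]
  have hu_low : 1 - t ≤ ‖u‖ := by
    have := norm_sub_norm_le x₀ (t • w)
    rw [hx₀n, htw] at this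
    exact this
  have hu_high : ‖u‖ ≤ 1 + t := by
    have := norm_sub_le x₀ (t • w)
    rw [hx₀n, htw] at this
    exact this
  have hu_pos : 0 < ‖u‖ := by linarith
  have hu0 : u ≠ 0 := by
    intro h0
    rw [h0, norm_zero] at hu_pos
    exact lt_irrefl _ hu_pos
  set y : E d := ‖u‖⁻¹ • u with hydef
  have hyn : ‖y‖ = 1 := by
    rw [hydef, norm_smul, Real.norm_eq_abs, abs_of_nonneg (inv_nonneg.2 hu_pos.le),
      inv_mul_cancel₀ hu_pos.ne']
  have hyu : ‖y - u‖ ≤ t := by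
    have : y - u = (‖u‖⁻¹ - 1) • u := by
      rw [hydef, sub_smul, one_smul]
    rw [this, norm_smul, Real.norm_eq_abs]
    have : |‖u‖⁻¹ - 1| * ‖u‖ = |1 - ‖u‖| := by
      rw [← abs_of_nonneg hu_pos.le (a := ‖u‖), ← abs_mul]
      rw [abs_of_nonneg hu_pos.le]
      rw [sub_mul, inv_mul_cancel₀ hu_pos.ne', one_mul, ← abs_neg, neg_sub]
    rw [this, abs_le]
    constructor <;> [linarith; linarith]
  have hyx₀ : ‖y - x₀‖ < ε := by
    have h1 : y - x₀ = (y - u) + (u - x₀) := by abel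
    have h2 : ‖u - x₀‖ = t := by
      rw [hudef]
      have : x₀ - t • w - x₀ = -(t • w) := by abel
      rw [this, norm_neg, htw]
    calc ‖y - x₀‖ ≤ ‖y - u‖ + ‖u - x₀‖ := by rw [h1]; exact norm_add_le _ _
      _ ≤ t + t := by rw [h2]; linarith
      _ < ε := by linarith
  have hyR : y ∈ R := by
    apply hball
    refine ⟨?_, mem_Sph_iff_norm.2 hyn⟩
    rw [mem_ball, dist_eq_norm]
    exact hyx₀
  have hneg : ⟪w, y⟫ < 0 := by
    have hww : ⟪w, w⟫ = 1 := by
      rw [real_inner_self_eq_norm_sq, hw, one_pow]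
    rw [hydef, real_inner_smul_right, hudef, inner_sub_right, real_inner_smul_right, hww, ← h]
    have : (0 : ℝ) - t * 1 < 0 := by linarith
    exact mul_neg_of_pos_of_neg (inv_pos.2 hu_pos) this
  exact absurd (hA _ hyR) (not_le.2 hneg)

private lemma lthick_nonneg (g h : E d) : 0 ≤ lthick g h := by
  have := Real.arccos_le_pi ⟪g, h⟫
  simp only [lthick, sdist]
  linarith

private lemma bddBelow_thickSet (C : Set (E d)) :
    BddBelow {w | ∃ g ∈ Sph d, ∃ h ∈ Sph d, g ≠ h ∧ g ≠ -h ∧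
      C ⊆ Hemi g ∩ Hemi h ∧ w = lthick g h} := by
  refine ⟨0, ?_⟩
  rintro w ⟨g, _, h, _, _, _, _, rfl⟩
  exact lthick_nonneg g h

private lemma thick_le_lune {C : Set (E d)} {g h : E d} (hg : g ∈ Sph d) (hh : h ∈ Sph d)
    (hgh : g ≠ h) (hgh' : g ≠ -h) (hsub : C ⊆ Hemi g ∩ Hemi h) : thick C ≤ lthick g h := by
  exact csInf_le (bddBelow_thickSet C) ⟨g, hg, h, hh, hgh, hgh', hsub, rfl⟩

private lemma coneSet_isClosed {C : Set (E d)} (hCS : C ⊆ Sph d) (hcl : IsClosed C)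
    (hne : C.Nonempty) : IsClosed (coneSet C) := by
  have hcomp : IsCompact C := (isCompact_sphere (0 : E d) 1).of_isClosed_subset hcl hCS
  apply IsSeqClosed.isClosed
  intro v p hv hlim
  choose r hr x hx hvx using hv
  have hnorm : ∀ n, ‖v n‖ = r n := by
    intro n
    rw [hvx n]
    exact norm_of_mem_coneSet hCS (hr n) (hx n)
  obtain ⟨a, ha, φ, hφ, hφlim⟩ := hcomp.tendsto_subseq hx
  have hrlim : Filter.Tendsto (fun n => r (φ n)) Filter.atTop (nhds ‖p‖) := by
    have h1 : Filter.Tendsto (fun n => ‖v (φ n)‖) Filter.atTop (nhds ‖p‖) :=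
      ((hlim.comp hφ.tendsto_atTop).norm)
    simpa only [hnorm] using h1
  have hsmul : Filter.Tendsto (fun n => v (φ n)) Filter.atTop (nhds (‖p‖ • a)) := by
    have : ∀ n, v (φ n) = r (φ n) • x (φ n) := fun n => hvx (φ n)
    simp only [this]
    exact hrlim.smul hφlim
  have hpa : p = ‖p‖ • a :=
    tendsto_nhds_unique (hlim.comp hφ.tendsto_atTop) hsmul
  exact ⟨‖p‖, norm_nonneg p, a, ha, hpa⟩

private lemma interior_coneSet_mem {R : Set (E d)} (hRS : R ⊆ Sph d) {x₀ : E d}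
    (hx₀ : x₀ ∈ sInterior R) : x₀ ∈ interior (coneSet R) := by
  obtain ⟨hx₀S, ε, hε, hball⟩ := hx₀
  have hx₀n : ‖x₀‖ = 1 := mem_Sph_iff_norm.1 hx₀S
  rw [mem_interior_iff_mem_nhds, Metric.mem_nhds_iff]
  refine ⟨min (ε / 3) (1 / 2), lt_min (by linarith) (by norm_num), ?_⟩
  intro v hv
  set ε' : ℝ := min (ε / 3) (1 / 2) with hε'def
  have hε'1 : ε' ≤ ε / 3 := min_le_left _ _
  have hε'2 : ε' ≤ 1 / 2 := min_le_right _ _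
  rw [mem_ball, dist_eq_norm] at hv
  have habs : |‖v‖ - 1| ≤ ‖v - x₀‖ := by
    have := abs_norm_sub_norm_le v x₀
    rwa [hx₀n] at this
  have hv_low : 1 - ε' ≤ ‖v‖ := by
    have := (abs_le.1 habs).1
    linarith
  have hv_high : ‖v‖ ≤ 1 + ε' := by
    have := (abs_le.1 habs).2
    linarith
  have hv_pos : 0 < ‖v‖ := by linarith
  set y : E d := ‖v‖⁻¹ • v with hydef
  have hyn : ‖y‖ = 1 := by
    rw [hydef, norm_smul, Real.norm_eq_abs, abs_of_nonneg (inv_nonneg.2 hv_pos.le),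
      inv_mul_cancel₀ hv_pos.ne']
  have hyv : ‖y - v‖ ≤ ε' := by
    have h1 : y - v = (‖v‖⁻¹ - 1) • v := by rw [hydef, sub_smul, one_smul]
    rw [h1, norm_smul, Real.norm_eq_abs]
    have h2 : |‖v‖⁻¹ - 1| * ‖v‖ = |1 - ‖v‖| := by
      rw [← abs_of_nonneg hv_pos.le (a := ‖v‖), ← abs_mul, abs_of_nonneg hv_pos.le,
        sub_mul, inv_mul_cancel₀ hv_pos.ne', one_mul, ← abs_neg, neg_sub]
    rw [h2, abs_le]
    constructor <;> linarith
  have hyx₀ : ‖y - x₀‖ < ε := by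
    calc ‖y - x₀‖ ≤ ‖y - v‖ + ‖v - x₀‖ := by
          have : y - x₀ = (y - v) + (v - x₀) := by abel
          rw [this]; exact norm_add_le _ _
      _ ≤ ε' + ε' := by linarith
      _ < ε := by linarith
  have hyR : y ∈ R := hball ⟨by rw [mem_ball, dist_eq_norm]; exact hyx₀, mem_Sph_iff_norm.2 hyn⟩
  have : v = ‖v‖ • y := by
    rw [hydef, smul_smul, mul_inv_cancel₀ hv_pos.ne', one_smul]
  rw [this]
  exact smul_mem_coneSet hyR (norm_nonneg v)

private lemma exists_support {R : Set (E d)} (hbody : IsBody R) {p : E d}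
    (hpR : p ∈ R) (hpn : p ∉ sInterior R) :
    ∃ k : E d, k ∈ Sph d ∧ R ⊆ Hemi k ∧ p ∈ bdHemi k := by
  obtain ⟨hRS, hRc, ⟨hAnti, hConv⟩, ⟨x₀, hx₀⟩⟩ := hbody
  have hConvC : Convex ℝ (coneSet R) := hConv
  have hx₀C : x₀ ∈ interior (coneSet R) := interior_coneSet_mem hRS hx₀
  have hpC : p ∉ interior (coneSet R) := by
    intro hmem
    rw [mem_interior_iff_mem_nhds, Metric.mem_nhds_iff] at hmem
    obtain ⟨ε, hε, hball'⟩ := hmem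
    exact hpn ⟨hRS hpR, ε, hε, fun y hy => coneSet_inter_Sph hRS (hball' hy.1) hy.2⟩
  obtain ⟨f, hf⟩ := geometric_hahn_banach_open_point hConvC.interior isOpen_interior hpC
  have hlin : ∀ (t : ℝ) (v v' : E d), f (t • v + (1 - t) • v') = t * f v + (1 - t) * f v' := by
    intro t v v'
    simp [map_add, map_smul, smul_eq_mul]
  have hfC : ∀ v ∈ coneSet R, f v ≤ f p := by
    intro v hv
    by_contra hlt
    push_neg at hlt
    have key : ∀ t : ℝ, 0 < t → t ≤ 1 → t * f x₀ + (1 - t) * f v < f p := by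
      intro t ht ht1
      rw [← hlin]
      exact hf _ (hConvC.combo_interior_closure_mem_interior hx₀C (subset_closure hv) ht
        (by linarith) (by ring))
    set B : ℝ := f v - f x₀ with hB
    set γ : ℝ := f v - f p with hγ
    have hγ0 : 0 < γ := by rw [hγ]; linarith
    rcases le_or_gt B 0 with hB0 | hB0
    · have := key 1 one_pos le_rfl
      simp only [sub_self, one_mul, zero_mul, add_zero] at this
      -- f x₀ < f p, but also t small?
      -- use instead: t * f x₀ + (1-t) * f v = f v - t * B
      have h2 := key 1 one_pos le_rfl
      nlinarith [key (1/2 : ℝ) (by norm_num) (by norm_num)]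
    · set t : ℝ := min 1 (γ / (2 * B)) with htdef
      have ht0 : 0 < t := lt_min one_pos (div_pos hγ0 (by linarith))
      have ht1 : t ≤ 1 := min_le_left _ _
      have h3 := key t ht0 ht1
      have heq : t * f x₀ + (1 - t) * f v = f v - t * B := by rw [hB]; ring
      rw [heq] at h3
      have htB : t * B ≤ γ / 2 := by
        have : t ≤ γ / (2 * B) := min_le_right _ _
        calc t * B ≤ (γ / (2 * B)) * B := by
              exact mul_le_mul_of_nonneg_right this (by linarith)
          _ = γ / 2 := by field_simp
      rw [hγ] at htB
      linarith
  have hfp0 : f p = 0 := by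
    have h1 : f ((2 : ℝ) • p) ≤ f p := hfC _ (smul_mem_coneSet hpR (by norm_num))
    rw [map_smul, smul_eq_mul] at h1
    have h2 : f (0 : E d) ≤ f p := hfC _ (zero_mem_coneSet ⟨p, hpR⟩)
    rw [map_zero] at h2
    linarith
  set w : E d := (InnerProductSpace.toDual ℝ (E d)).symm f with hwdef
  have hwf : ∀ v : E d, ⟪w, v⟫ = f v := fun v => InnerProductSpace.toDual_symm_apply
  have hwne : w ≠ 0 := by
    intro h0
    have := hf x₀ hx₀C
    rw [← hwf, h0, inner_zero_left, ← hwf, h0, inner_zero_left] at this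
    exact lt_irrefl _ this
  have hwn : 0 < ‖w‖ := norm_pos_iff.2 hwne
  set k : E d := -(‖w‖⁻¹ • w) with hkdef
  have hkn : ‖k‖ = 1 := by
    rw [hkdef, norm_neg, norm_smul, Real.norm_eq_abs, abs_of_nonneg (inv_nonneg.2 hwn.le),
      inv_mul_cancel₀ hwn.ne']
  have hkinner : ∀ v : E d, ⟪k, v⟫ = -(‖w‖⁻¹ * f v) := by
    intro v
    rw [hkdef, inner_neg_left, real_inner_smul_left, hwf]
  refine ⟨k, mem_Sph_iff_norm.2 hkn, ?_, ?_⟩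
  · intro x hx
    refine ⟨hRS hx, ?_⟩
    rw [hkinner]
    have : f x ≤ 0 := by
      have := hfC x (self_mem_coneSet hx)
      rwa [hfp0] at this
    have h4 : ‖w‖⁻¹ * f x ≤ 0 := mul_nonpos_of_nonneg_of_nonpos (inv_nonneg.2 hwn.le) this
    linarith
  · refine ⟨hRS hpR, ?_⟩
    rw [hkinner, hfp0]
    ring

private lemma dualC_isClosed (S : Set (E d)) : IsClosed (dualC S) := by
  rw [← dualC_coe]
  exact (ProperCone.innerDual S).isClosed

private lemma dualC_convex (S : Set (E d)) : Convex ℝ (dualC S) := by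
  intro x hx y hy a b ha hb _
  intro v hv
  rw [inner_add_right, real_inner_smul_right, real_inner_smul_right]
  exact add_nonneg (mul_nonneg ha (hx v hv)) (mul_nonneg hb (hy v hv))

private lemma norm_eq_one_of_sq {w : E d} (h : ‖w‖ ^ 2 = 1) : ‖w‖ = 1 := by
  rw [← Real.sqrt_sq (norm_nonneg w), h, Real.sqrt_one]

set_option maxHeartbeats 1600000 in
/-- The main uniqueness lemma: two supporting hemispheres at a common boundary point of a
reduced body of thickness `> π/2` coincide. -/
private lemma support_eq {R : Set (E d)} (hR : Reduced R) (hth : Real.pi / 2 < thick R)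
    {p k₁ k₂ : E d} (hpR : p ∈ R)
    (hk₁S : k₁ ∈ Sph d) (hk₁H : R ⊆ Hemi k₁) (hk₁b : p ∈ bdHemi k₁)
    (hk₂S : k₂ ∈ Sph d) (hk₂H : R ⊆ Hemi k₂) (hk₂b : p ∈ bdHemi k₂) : k₁ = k₂ := by
  by_contra hne
  obtain ⟨hbody, hred⟩ := hR
  obtain ⟨hRS, hRc, ⟨hAnti, hConv⟩, hInt⟩ := hbody
  obtain ⟨x₀, hx₀⟩ := hInt
  have hConvC : Convex ℝ (coneSet R) := hConv
  have hpS : ‖p‖ = 1 := mem_Sph_iff_norm.1 (hRS hpR)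
  have hk₁n : ‖k₁‖ = 1 := mem_Sph_iff_norm.1 hk₁S
  have hk₂n : ‖k₂‖ = 1 := mem_Sph_iff_norm.1 hk₂S
  have hk₁p : ⟪k₁, p⟫ = 0 := hk₁b.2
  have hk₂p : ⟪k₂, p⟫ = 0 := hk₂b.2
  -- the set of centers of supporting hemispheres
  set A : Set (E d) := {w : E d | ‖w‖ = 1 ∧ ∀ x ∈ R, 0 ≤ ⟪w, x⟫} with hAdef
  have hk₁A : k₁ ∈ A := ⟨hk₁n, fun x hx => (hk₁H hx).2⟩
  have hk₂A : k₂ ∈ A := ⟨hk₂n, fun x hx => (hk₂H hx).2⟩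
  have hAm : ∀ w ∈ A, R ⊆ Hemi w := fun w hw x hx => ⟨hRS hx, hw.2 x hx⟩
  have hApos : ∀ w ∈ A, 0 < ⟪w, x₀⟫ := fun w hw => inner_sInterior_pos hw.1 hw.2 hx₀
  -- the thickness set
  set TS : Set ℝ := {w | ∃ g ∈ Sph d, ∃ h ∈ Sph d, g ≠ h ∧ g ≠ -h ∧
    R ⊆ Hemi g ∩ Hemi h ∧ w = lthick g h} with hTSdef
  have hthickR : thick R = sInf TS := rfl
  have hTSne : TS.Nonempty := by
    by_contra hemp
    rw [Set.not_nonempty_iff_eq_empty] at hemp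
    rw [hthickR, hemp, Real.sInf_empty] at hth
    linarith [Real.pi_pos]
  obtain ⟨δ, hδdef⟩ : ∃ δ : ℝ, δ = Real.pi - thick R := ⟨_, rfl⟩
  have hδub : δ < Real.pi / 2 := by rw [hδdef]; linarith
  have hδ0 : 0 ≤ δ := by
    obtain ⟨w0, hw0⟩ := hTSne
    have hw0' := hw0
    obtain ⟨g, _, h, _, _, _, _, hw0eq⟩ := hw0'
    have h1 : w0 ≤ Real.pi := by
      rw [hw0eq]
      have := Real.arccos_nonneg ⟪g, h⟫
      simp only [lthick, sdist]
      linarith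
    have h2 : thick R ≤ w0 := by
      rw [hthickR]
      exact csInf_le (bddBelow_thickSet R) hw0
    rw [hδdef]; linarith only [h1, h2, hth]
  have hδpi : δ ≤ Real.pi := by linarith [Real.pi_pos]
  -- key consequence of thickness > π/2 : all supporting centers are pairwise close
  have F1all : ∀ u ∈ A, ∀ v ∈ A, Real.cos δ ≤ ⟪u, v⟫ := by
    intro u hu v hv
    rcases eq_or_ne u v with rfl | huv
    · rw [real_inner_self_eq_norm_sq, hu.1, one_pow]
      exact Real.cos_le_one δ
    rcases eq_or_ne u (-v) with rfl | huv'
    · exfalso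
      have h1 := hApos _ hu
      have h2 := hApos _ hv
      rw [inner_neg_left] at h1
      linarith
    have hsub : R ⊆ Hemi u ∩ Hemi v := subset_inter (hAm u hu) (hAm v hv)
    have hle := thick_le_lune (mem_Sph_iff_norm.2 hu.1) (mem_Sph_iff_norm.2 hv.1) huv huv' hsub
    have harc : Real.arccos ⟪u, v⟫ ≤ δ := by
      simp only [lthick, sdist] at hle
      rw [hδdef]; linarith only [hle]
    have hb : |⟪u, v⟫| ≤ 1 := by
      have := abs_real_inner_le_norm u v
      rwa [hu.1, hv.1, mul_one] at this
    calc Real.cos δ ≤ Real.cos (Real.arccos ⟪u, v⟫) :=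
          Real.cos_le_cos_of_nonneg_of_le_pi (Real.arccos_nonneg _) hδpi harc
      _ = ⟪u, v⟫ := Real.cos_arccos (neg_le_of_abs_le hb) (le_of_abs_le hb)
  -- basic quantities
  obtain ⟨c, hcdef⟩ : ∃ c : ℝ, c = ⟪k₁, k₂⟫ := ⟨_, rfl⟩
  have hc1 : c < 1 := by
    have hnorm : ‖k₁ - k₂‖ ^ 2 = 2 - 2 * c := by
      rw [norm_sub_sq_real, hk₁n, hk₂n, hcdef]; ring
    have hpos : 0 < ‖k₁ - k₂‖ := norm_pos_iff.2 (sub_ne_zero.2 hne)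
    nlinarith [hnorm, hpos, sq_nonneg ‖k₁ - k₂‖]
  have hcδ : Real.cos δ ≤ c := by rw [hcdef]; exact F1all k₁ hk₁A k₂ hk₂A
  have hδpos : 0 < δ := by
    rcases hδ0.lt_or_eq with h | h
    · exact h
    · exfalso
      rw [← h, Real.cos_zero] at hcδ
      linarith only [hcδ, hc1]
  have hcosδ : 0 < Real.cos δ := Real.cos_pos_of_mem_Ioo ⟨by linarith [Real.pi_pos], hδub⟩
  obtain ⟨N, hNdef⟩ : ∃ N : ℝ, N = ‖k₁ + k₂‖ := ⟨_, rfl⟩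
  have hN2 : N ^ 2 = 2 + 2 * c := by
    rw [hNdef, norm_add_sq_real, hk₁n, hk₂n, hcdef]; ring
  have hNpos : 0 < N := by
    rw [hNdef]
    rcases (norm_nonneg (k₁ + k₂)).lt_or_eq with h | h
    · exact h
    · exfalso
      rw [hNdef, ← h] at hN2
      nlinarith [hN2, hcδ, hcosδ]
  have hNlt : N < 2 := by nlinarith [hN2, hc1, hNpos]
  obtain ⟨m, hmdef⟩ : ∃ m : E d, m = N⁻¹ • (k₁ + k₂) := ⟨_, rfl⟩
  have hmn : ‖m‖ = 1 := by
    rw [hmdef, norm_smul, Real.norm_eq_abs, abs_of_nonneg (inv_nonneg.2 hNpos.le), ← hNdef,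
      inv_mul_cancel₀ hNpos.ne']
  have hminner : ∀ v : E d, ⟪m, v⟫ = N⁻¹ * (⟪k₁, v⟫ + ⟪k₂, v⟫) := by
    intro v
    rw [hmdef, real_inner_smul_left, inner_add_left]
  have hmA : m ∈ A := by
    refine ⟨hmn, fun x hx => ?_⟩
    rw [hminner]
    exact mul_nonneg (inv_nonneg.2 hNpos.le) (add_nonneg ((hk₁H hx).2) ((hk₂H hx).2))
  have hmp : ⟪m, p⟫ = 0 := by rw [hminner, hk₁p, hk₂p]; ring
  -- main case distinction
  by_cases hcase : ∃ f ∈ A, ⟪f, m⟫ ≤ Real.cos δ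
  · -- Case 1 : some supporting center is at maximal distance from `m`.
    obtain ⟨f, hfA, hfm⟩ := hcase
    have ha₁ : Real.cos δ ≤ ⟪f, k₁⟫ := F1all f hfA k₁ hk₁A
    have ha₂ : Real.cos δ ≤ ⟪f, k₂⟫ := F1all f hfA k₂ hk₂A
    have hfm' : ⟪f, m⟫ = N⁻¹ * (⟪f, k₁⟫ + ⟪f, k₂⟫) := by
      rw [hmdef, real_inner_smul_right, inner_add_right]
    have hNf : N * ⟪f, m⟫ = ⟪f, k₁⟫ + ⟪f, k₂⟫ := by
      rw [hfm']
      field_simp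
    nlinarith [hNf, ha₁, ha₂, hfm, hNlt, hcosδ, hNpos]
  · -- Case 2 : all supporting centers are strictly closer than `δ` to `m`; then
    -- a neighborhood of `m` can be used to cut `R` near `p`, contradicting reducedness.
    push_neg at hcase
    -- `A` is compact
    have hAclosed : IsClosed A := by
      have h1 : IsClosed {w : E d | ‖w‖ = 1} := isClosed_eq continuous_norm continuous_const
      have h2 : IsClosed {w : E d | ∀ x ∈ R, 0 ≤ ⟪w, x⟫} := by
        have : {w : E d | ∀ x ∈ R, 0 ≤ ⟪w, x⟫} = ⋂ x ∈ R, {w : E d | 0 ≤ ⟪w, x⟫} := by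
          ext w; simp
        rw [this]
        exact isClosed_biInter fun x _ =>
          isClosed_le continuous_const (continuous_id.inner continuous_const)
      exact h1.inter h2
    have hAcomp : IsCompact A := by
      apply (isCompact_closedBall (0 : E d) 1).of_isClosed_subset hAclosed
      intro w hw
      rw [mem_closedBall, dist_zero_right, hw.1]
    obtain ⟨fs, hfsA, hfsmin⟩ := hAcomp.exists_isMinOn ⟨k₁, hk₁A⟩
      ((continuous_id.inner continuous_const).continuousOn : ContinuousOn (fun w => ⟪w, m⟫) A)
    obtain ⟨cm, hcmdef⟩ : ∃ cm : ℝ, cm = ⟪fs, m⟫ := ⟨_, rfl⟩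
    have hmin : ∀ w ∈ A, cm ≤ ⟪w, m⟫ := fun w hw => by rw [hcmdef]; exact hfsmin hw
    have hcm_gt : Real.cos δ < cm := by rw [hcmdef]; exact hcase fs hfsA
    have hcm_le1 : cm ≤ 1 := by
      rw [hcmdef]
      have := real_inner_le_norm fs m
      rwa [hfsA.1, hmn, mul_one] at this
    have hcm_pos : 0 < cm := lt_trans hcosδ hcm_gt
    have hmx₀ : 0 < ⟪m, x₀⟫ := hApos m hmA
    -- choice of the angle η
    obtain ⟨η, hηdef⟩ : ∃ η : ℝ, η = min (min ((cm - Real.cos δ) / 2) (δ / 2)) (⟪m, x₀⟫ / 2) := ⟨_, rfl⟩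
    have hη0 : 0 < η := by
      rw [hηdef]
      apply lt_min (lt_min (by linarith) (by linarith)) (by linarith)
    have hη1 : η ≤ (cm - Real.cos δ) / 2 := by
      rw [hηdef]; exact le_trans (min_le_left _ _) (min_le_left _ _)
    have hη2 : η ≤ δ / 2 := by
      rw [hηdef]; exact le_trans (min_le_left _ _) (min_le_right _ _)
    have hη3 : η ≤ ⟪m, x₀⟫ / 2 := by rw [hηdef]; exact min_le_right _ _
    have hπ4 : Real.pi / 4 < 1 := by
      have := Real.pi_lt_d2
      linarith
    have hη_le1 : η ≤ 1 := by
      have : η ≤ Real.pi / 4 := by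
        have := hδub
        linarith [hη2]
      linarith
    have hηπ : η < Real.pi := by linarith [Real.pi_gt_three]
    have hsinpos : 0 < Real.sin η := Real.sin_pos_of_pos_of_lt_pi hη0 hηπ
    have hsinle : Real.sin η ≤ η := Real.sin_le hη0.le
    have hcosηpos : 0 < Real.cos η :=
      Real.cos_pos_of_mem_Ioo ⟨by linarith [Real.pi_pos], by linarith [hδub]⟩
    have hcosη1 : Real.cos η ≤ 1 := Real.cos_le_one η
    have hsinη1 : Real.sin η ≤ 1 := by linarith
    have hkeyη : Real.cos δ ≤ cm * Real.cos η - Real.sin η := by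
      have h1 : 1 - η ^ 2 / 2 ≤ Real.cos η := Real.one_sub_sq_div_two_le_cos
      have h2 : cm * (1 - η ^ 2 / 2) ≤ cm * Real.cos η := mul_le_mul_of_nonneg_left h1 hcm_pos.le
      have h4 : cm * η ^ 2 ≤ η ^ 2 := mul_le_of_le_one_left (sq_nonneg η) hcm_le1
      have h3 : η ^ 2 ≤ η := by rw [sq]; exact mul_le_of_le_one_left hη0.le hη_le1
      have h5 : cm * (1 - η ^ 2 / 2) = cm - cm * η ^ 2 / 2 := by ring
      linarith only [h2, h3, h4, h5, hsinle, hη1, hcm_gt]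
    -- the cutting cone and its dual
    set D₂ : Set (E d) := {w : E d | Real.cos η * ‖w‖ ≤ ⟪m, w⟫} with hD₂def
    set P : Set (E d) := dualC D₂ with hPdef
    set Z : Set (E d) := R ∩ P with hZdef
    have hpythag : Real.sin η ^ 2 + Real.cos η ^ 2 = 1 := Real.sin_sq_add_cos_sq η
    -- points spherically η-close to `m` (in the dual sense) belong to `P`
    have cap_mem_P : ∀ v : E d, Real.sin η * ‖v‖ ≤ ⟪m, v⟫ → v ∈ P := by
      intro v hv w hw
      have hwm : Real.cos η * ‖w‖ ≤ ⟪m, w⟫ := hw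
      have hmm : ⟪m, m⟫ = 1 := by rw [real_inner_self_eq_norm_sq, hmn, one_pow]
      have ht0 : 0 ≤ ⟪m, w⟫ := le_trans (mul_nonneg hcosηpos.le (norm_nonneg w)) hwm
      have hs0 : 0 ≤ ⟪m, v⟫ := le_trans (mul_nonneg hsinpos.le (norm_nonneg v)) hv
      have hexp : ⟪w - ⟪m, w⟫ • m, v - ⟪m, v⟫ • m⟫ = ⟪w, v⟫ - ⟪m, w⟫ * ⟪m, v⟫ := by
        simp only [inner_sub_left, inner_sub_right, real_inner_smul_left, real_inner_smul_right,
          hmm]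
        rw [real_inner_comm w m]
        ring
      have hwnorm : ‖w - ⟪m, w⟫ • m‖ ^ 2 = ‖w‖ ^ 2 - ⟪m, w⟫ ^ 2 := by
        have h8 : ‖⟪m, w⟫ • m‖ ^ 2 = ⟪m, w⟫ ^ 2 := by
          rw [norm_smul, hmn, mul_one, Real.norm_eq_abs, sq_abs]
        rw [norm_sub_sq_real, h8, real_inner_smul_right, real_inner_comm w m]
        ring
      have hvnorm : ‖v - ⟪m, v⟫ • m‖ ^ 2 = ‖v‖ ^ 2 - ⟪m, v⟫ ^ 2 := by
        have h8 : ‖⟪m, v⟫ • m‖ ^ 2 = ⟪m, v⟫ ^ 2 := by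
          rw [norm_smul, hmn, mul_one, Real.norm_eq_abs, sq_abs]
        rw [norm_sub_sq_real, h8, real_inner_smul_right, real_inner_comm v m]
        ring
      have hwb : ‖w - ⟪m, w⟫ • m‖ ≤ Real.sin η * ‖w‖ := by
        have hsq : ‖w - ⟪m, w⟫ • m‖ ^ 2 ≤ (Real.sin η * ‖w‖) ^ 2 := by
          rw [hwnorm]
          have h6 : (Real.cos η * ‖w‖) ^ 2 ≤ ⟪m, w⟫ ^ 2 :=
            pow_le_pow_left₀ (mul_nonneg hcosηpos.le (norm_nonneg w)) hwm 2
          have h7 : (Real.sin η * ‖w‖) ^ 2 + (Real.cos η * ‖w‖) ^ 2 = ‖w‖ ^ 2 := by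
            calc (Real.sin η * ‖w‖) ^ 2 + (Real.cos η * ‖w‖) ^ 2
                = (Real.sin η ^ 2 + Real.cos η ^ 2) * ‖w‖ ^ 2 := by ring
              _ = ‖w‖ ^ 2 := by rw [hpythag, one_mul]
          linarith only [h6, h7]
        calc ‖w - ⟪m, w⟫ • m‖ = Real.sqrt (‖w - ⟪m, w⟫ • m‖ ^ 2) :=
              (Real.sqrt_sq (norm_nonneg _)).symm
          _ ≤ Real.sqrt ((Real.sin η * ‖w‖) ^ 2) := Real.sqrt_le_sqrt hsq
          _ = Real.sin η * ‖w‖ := Real.sqrt_sq (mul_nonneg hsinpos.le (norm_nonneg w))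
      have hvb : ‖v - ⟪m, v⟫ • m‖ ≤ Real.cos η * ‖v‖ := by
        have hsq : ‖v - ⟪m, v⟫ • m‖ ^ 2 ≤ (Real.cos η * ‖v‖) ^ 2 := by
          rw [hvnorm]
          have h6 : (Real.sin η * ‖v‖) ^ 2 ≤ ⟪m, v⟫ ^ 2 :=
            pow_le_pow_left₀ (mul_nonneg hsinpos.le (norm_nonneg v)) hv 2
          have h7 : (Real.sin η * ‖v‖) ^ 2 + (Real.cos η * ‖v‖) ^ 2 = ‖v‖ ^ 2 := by
            calc (Real.sin η * ‖v‖) ^ 2 + (Real.cos η * ‖v‖) ^ 2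
                = (Real.sin η ^ 2 + Real.cos η ^ 2) * ‖v‖ ^ 2 := by ring
              _ = ‖v‖ ^ 2 := by rw [hpythag, one_mul]
          linarith only [h6, h7]
        calc ‖v - ⟪m, v⟫ • m‖ = Real.sqrt (‖v - ⟪m, v⟫ • m‖ ^ 2) :=
              (Real.sqrt_sq (norm_nonneg _)).symm
          _ ≤ Real.sqrt ((Real.cos η * ‖v‖) ^ 2) := Real.sqrt_le_sqrt hsq
          _ = Real.cos η * ‖v‖ := Real.sqrt_sq (mul_nonneg hcosηpos.le (norm_nonneg v))
      have hCS : -(‖w - ⟪m, w⟫ • m‖ * ‖v - ⟪m, v⟫ • m‖) ≤ ⟪w - ⟪m, w⟫ • m, v - ⟪m, v⟫ • m⟫ :=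
        neg_le_of_abs_le (abs_real_inner_le_norm _ _)
      have hts : Real.cos η * ‖w‖ * (Real.sin η * ‖v‖) ≤ ⟪m, w⟫ * ⟪m, v⟫ :=
        mul_le_mul hwm hv (mul_nonneg hsinpos.le (norm_nonneg v)) ht0
      have hprod : ‖w - ⟪m, w⟫ • m‖ * ‖v - ⟪m, v⟫ • m‖
          ≤ Real.sin η * ‖w‖ * (Real.cos η * ‖v‖) :=
        mul_le_mul hwb hvb (norm_nonneg _) (mul_nonneg hsinpos.le (norm_nonneg w))
      have hfin : ⟪w, v⟫ = ⟪m, w⟫ * ⟪m, v⟫ + ⟪w - ⟪m, w⟫ • m, v - ⟪m, v⟫ • m⟫ := by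
        rw [hexp]; ring
      rw [hfin]
      have heq0 : Real.cos η * ‖w‖ * (Real.sin η * ‖v‖)
          = Real.sin η * ‖w‖ * (Real.cos η * ‖v‖) := by ring
      linarith only [hts, hprod, hCS, heq0]
    -- `x₀` is an interior point of `Z`
    have hx₀S : x₀ ∈ Sph d := hx₀.1
    have hx₀n : ‖x₀‖ = 1 := mem_Sph_iff_norm.1 hx₀S
    have hx₀R : x₀ ∈ R := sInterior_subset_self hx₀
    have hsinx₀ : Real.sin η < ⟪m, x₀⟫ := by linarith
    have hx₀P : x₀ ∈ P := cap_mem_P x₀ (by rw [hx₀n, mul_one]; linarith)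
    have hx₀Z : x₀ ∈ Z := ⟨hx₀R, hx₀P⟩
    have hx₀sIntZ : x₀ ∈ sInterior Z := by
      obtain ⟨_, ε, hε, hball⟩ := hx₀
      refine ⟨hx₀S, min ε (⟪m, x₀⟫ - Real.sin η), lt_min hε (by linarith), ?_⟩
      rintro y ⟨hy1, hy2⟩
      have hyball : y ∈ Metric.ball x₀ ε :=
        Metric.ball_subset_ball (min_le_left _ _) hy1
      have hyR : y ∈ R := hball ⟨hyball, hy2⟩
      have hyn : ‖y‖ = 1 := mem_Sph_iff_norm.1 hy2
      have hyd : ‖y - x₀‖ < ⟪m, x₀⟫ - Real.sin η := by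
        have h1 : dist y x₀ < min ε (⟪m, x₀⟫ - Real.sin η) := hy1
        rw [dist_eq_norm] at h1
        exact lt_of_lt_of_le h1 (min_le_right _ _)
      have hmy : Real.sin η ≤ ⟪m, y⟫ := by
        have hsplit : ⟪m, y⟫ = ⟪m, x₀⟫ + ⟪m, y - x₀⟫ := by
          rw [inner_sub_right]; ring
        have hCS : -(‖y - x₀‖) ≤ ⟪m, y - x₀⟫ := by
          have h1 := neg_le_of_abs_le (abs_real_inner_le_norm m (y - x₀))
          rwa [hmn, one_mul] at h1
        rw [hsplit]
        linarith only [hCS, hyd, hsinpos]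
      exact ⟨hyR, cap_mem_P y (by rw [hyn, mul_one]; exact hmy)⟩
    -- `Z` is a proper convex subbody of `R`
    have hconeZ : coneSet Z = coneSet R ∩ P := by
      ext v
      constructor
      · rintro ⟨r, hr, x, ⟨hxR, hxP⟩, rfl⟩
        exact ⟨smul_mem_coneSet hxR hr, smul_mem_dualC hxP hr⟩
      · rintro ⟨⟨r, hr, x, hxR, rfl⟩, hvP⟩
        rcases hr.lt_or_eq with hr0 | hr0
        · refine ⟨r, hr, x, ⟨hxR, ?_⟩, rfl⟩
          intro w hw
          have h1 := hvP w hw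
          rw [real_inner_smul_right] at h1
          by_contra hneg
          push_neg at hneg
          exact absurd h1 (not_le.2 (mul_neg_of_pos_of_neg hr0 hneg))
        · rw [← hr0, zero_smul]
          exact zero_mem_coneSet ⟨x₀, hx₀Z⟩
    have hZbody : IsBody Z := by
      refine ⟨fun x hx => hRS hx.1, hRc.inter (dualC_isClosed D₂), ⟨?_, ?_⟩, ⟨x₀, hx₀sIntZ⟩⟩
      · intro x hx hnx
        exact hAnti x hx.1 hnx.1
      · have : {v : E d | ∃ r : ℝ, 0 ≤ r ∧ ∃ x ∈ Z, v = r • x} = coneSet Z := rfl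
        rw [this, hconeZ]
        exact hConvC.inter (dualC_convex D₂)
    have hpP : p ∉ P := by
      intro hp
      set w₀ : E d := Real.cos η • m - Real.sin η • p with hw₀def
      have hw₀n : ‖w₀‖ = 1 := by
        apply norm_eq_one_of_sq
        have h1 : ‖Real.cos η • m‖ ^ 2 = Real.cos η ^ 2 := by
          rw [norm_smul, hmn, mul_one, Real.norm_eq_abs, sq_abs]
        have h2 : ‖Real.sin η • p‖ ^ 2 = Real.sin η ^ 2 := by
          rw [norm_smul, hpS, mul_one, Real.norm_eq_abs, sq_abs]
        have h3 : ⟪Real.cos η • m, Real.sin η • p⟫ = 0 := by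
          rw [real_inner_smul_left, real_inner_smul_right, hmp]; ring
        rw [hw₀def, norm_sub_sq_real, h1, h2, h3]
        linarith [hpythag]
      have hw₀D₂ : w₀ ∈ D₂ := by
        show Real.cos η * ‖w₀‖ ≤ ⟪m, w₀⟫
        have hmm : ⟪m, m⟫ = 1 := by rw [real_inner_self_eq_norm_sq, hmn, one_pow]
        have e1 : ⟪m, Real.cos η • m⟫ = Real.cos η := by
          rw [real_inner_smul_right, hmm, mul_one]
        have e2 : ⟪m, Real.sin η • p⟫ = 0 := by
          rw [real_inner_smul_right, hmp, mul_zero]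
        have h4 : ⟪m, w₀⟫ = Real.cos η := by
          rw [hw₀def, inner_sub_right, e1, e2, sub_zero]
        rw [h4, hw₀n, mul_one]
      have hw₀p : ⟪w₀, p⟫ < 0 := by
        have f1 : ⟪Real.cos η • m, p⟫ = 0 := by
          rw [real_inner_smul_left, hmp, mul_zero]
        have f2 : ⟪Real.sin η • p, p⟫ = Real.sin η := by
          rw [real_inner_smul_left, real_inner_self_eq_norm_sq, hpS]
          ring
        rw [hw₀def, inner_sub_left, f1, f2, zero_sub]
        linarith only [hsinpos]
      exact absurd (hp w₀ hw₀D₂) (not_le.2 hw₀p)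
    have hZne : Z ≠ R := by
      intro hEq
      exact hpP (hEq.symm ▸ hpR : p ∈ Z).2
    have hZR : Z ⊆ R := inter_subset_left
    have hthickZ : thick Z < thick R := hred Z hZbody hZR hZne
    -- extract a thin lune around `Z`
    set TSZ : Set ℝ := {w | ∃ g ∈ Sph d, ∃ h ∈ Sph d, g ≠ h ∧ g ≠ -h ∧
      Z ⊆ Hemi g ∩ Hemi h ∧ w = lthick g h} with hTSZdef
    have hthickZ' : thick Z = sInf TSZ := rfl
    have hTSZne : TSZ.Nonempty := by
      obtain ⟨w0, hw0⟩ := hTSne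
      obtain ⟨g, hg, h, hh, h1, h2, h3, h4⟩ := hw0
      exact ⟨w0, g, hg, h, hh, h1, h2, subset_trans hZR h3, h4⟩
    obtain ⟨w1, hw1mem, hw1lt⟩ := exists_lt_of_csInf_lt hTSZne (by rw [← hthickZ']; exact hthickZ)
    obtain ⟨u, huS, v, hvS, huv, huv', hZsub, rfl⟩ := hw1mem
    have hun : ‖u‖ = 1 := mem_Sph_iff_norm.1 huS
    have hvn : ‖v‖ = 1 := mem_Sph_iff_norm.1 hvS
    have harc : δ < Real.arccos ⟪u, v⟫ := by
      simp only [lthick, sdist] at hw1lt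
      rw [hδdef]
      linarith
    have hb : |⟪u, v⟫| ≤ 1 := by
      have := abs_real_inner_le_norm u v
      rwa [hun, hvn, mul_one] at this
    have hinner_lt : ⟪u, v⟫ < Real.cos δ := by
      have h1 : Real.cos (Real.arccos ⟪u, v⟫) < Real.cos δ :=
        Real.strictAntiOn_cos ⟨hδ0, hδpi⟩ ⟨Real.arccos_nonneg _, Real.arccos_le_pi _⟩ harc
      rwa [Real.cos_arccos (neg_le_of_abs_le hb) (le_of_abs_le hb)] at h1
    -- convex-cone structures for the dual decomposition
    have hK₁closed : IsClosed (coneSet R) := coneSet_isClosed hRS hRc ⟨p, hpR⟩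
    have hD₂closed : IsClosed D₂ :=
      isClosed_le (continuous_const.mul continuous_norm) (continuous_const.inner continuous_id)
    set K₁cone : ConvexCone ℝ (E d) :=
      { carrier := coneSet R
        smul_mem' := by
          rintro cc hcc v ⟨r, hr, x, hx, rfl⟩
          rw [smul_smul]
          exact ⟨cc * r, mul_nonneg hcc.le hr, x, hx, rfl⟩
        add_mem' := by
          rintro v hv v' hv'
          have hmid : (1/2 : ℝ) • v + (1/2 : ℝ) • v' ∈ coneSet R :=
            hConvC hv hv' (by norm_num) (by norm_num) (by norm_num)
          obtain ⟨r, hr, z, hz, heq⟩ := hmid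
          have hvv : v + v' = (2 : ℝ) • ((1/2 : ℝ) • v + (1/2 : ℝ) • v') := by
            rw [smul_add, smul_smul, smul_smul]
            norm_num
          rw [hvv, heq, smul_smul]
          exact ⟨2 * r, by linarith, z, hz, rfl⟩ } with hK₁cone
    set D₂cone : ConvexCone ℝ (E d) :=
      { carrier := D₂
        smul_mem' := by
          intro cc hcc w hw
          show Real.cos η * ‖cc • w‖ ≤ ⟪m, cc • w⟫
          rw [norm_smul, Real.norm_eq_abs, abs_of_nonneg hcc.le, real_inner_smul_right]
          have h1 : Real.cos η * ‖w‖ ≤ ⟪m, w⟫ := hw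
          calc Real.cos η * (cc * ‖w‖) = cc * (Real.cos η * ‖w‖) := by ring
            _ ≤ cc * ⟪m, w⟫ := mul_le_mul_of_nonneg_left h1 hcc.le
        add_mem' := by
          intro w hw w' hw'
          show Real.cos η * ‖w + w'‖ ≤ ⟪m, w + w'⟫
          rw [inner_add_right]
          have h1 : Real.cos η * ‖w + w'‖ ≤ Real.cos η * (‖w‖ + ‖w'‖) :=
            mul_le_mul_of_nonneg_left (norm_add_le w w') hcosηpos.le
          rw [mul_add] at h1
          have h2 : Real.cos η * ‖w‖ ≤ ⟪m, w⟫ := hw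
          have h3 : Real.cos η * ‖w'‖ ≤ ⟪m, w'⟫ := hw'
          linarith } with hD₂cone
    set K₂cone : ConvexCone ℝ (E d) :=
      { carrier := P
        smul_mem' := fun _ hcc _ hv => smul_mem_dualC hv hcc.le
        add_mem' := fun _ hv _ hv' => add_mem_dualC hv hv' } with hK₂cone
    have happly : dualC (coneSet R ∩ P) = closure (dualC (coneSet R) + dualC P) :=
      dualC_inter K₁cone K₂cone ⟨0, zero_mem_coneSet ⟨p, hpR⟩⟩ ⟨0, zero_mem_dualC _⟩
        hK₁closed (dualC_isClosed D₂)
    have hD₂zero : (0 : E d) ∈ D₂ := by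
      show Real.cos η * ‖(0 : E d)‖ ≤ ⟪m, (0 : E d)⟫
      rw [norm_zero, inner_zero_right, mul_zero]
    have hD₂dd : dualC P = D₂ := dualC_dualC D₂cone ⟨0, hD₂zero⟩ hD₂closed
    have hcZ : dualC (coneSet Z) = closure (dualC (coneSet R) + D₂) := by
      rw [hconeZ, happly, hD₂dd]
    -- `u` and `v` lie in the dual cone of `Z`
    have hdualZ : ∀ y : E d, Z ⊆ Hemi y → y ∈ dualC (coneSet Z) := by
      rintro y hy z ⟨r, hr, x, hx, rfl⟩
      rw [real_inner_smul_left]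
      refine mul_nonneg hr ?_
      rw [real_inner_comm]
      exact (hy hx).2
    have hu_cl : u ∈ closure (dualC (coneSet R) + D₂) := by
      rw [← hcZ]
      exact hdualZ u fun x hx => (hZsub hx).1
    have hv_cl : v ∈ closure (dualC (coneSet R) + D₂) := by
      rw [← hcZ]
      exact hdualZ v fun x hx => (hZsub hx).2
    -- pairwise lower bounds on inner products of dual elements
    have hmemA : ∀ a : E d, a ∈ dualC (coneSet R) → a ≠ 0 → ‖a‖⁻¹ • a ∈ A := by
      intro a ha ha0
      have hna : 0 < ‖a‖ := norm_pos_iff.2 ha0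
      refine ⟨?_, fun x hx => ?_⟩
      · rw [norm_smul, Real.norm_eq_abs, abs_of_nonneg (inv_nonneg.2 hna.le),
          inv_mul_cancel₀ hna.ne']
      · rw [real_inner_smul_left]
        refine mul_nonneg (inv_nonneg.2 hna.le) ?_
        rw [real_inner_comm]
        exact ha x (self_mem_coneSet hx)
    have hscale : ∀ x y : E d, x ≠ 0 → y ≠ 0 →
        Real.cos δ ≤ ⟪‖x‖⁻¹ • x, ‖y‖⁻¹ • y⟫ → Real.cos δ * (‖x‖ * ‖y‖) ≤ ⟪x, y⟫ := by
      intro x y hx0 hy0 h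
      have hnx : 0 < ‖x‖ := norm_pos_iff.2 hx0
      have hny : 0 < ‖y‖ := norm_pos_iff.2 hy0
      rw [real_inner_smul_left, real_inner_smul_right] at h
      have h2 := mul_le_mul_of_nonneg_left h (mul_pos hnx hny).le
      have h3 : ‖x‖ * ‖y‖ * (‖x‖⁻¹ * (‖y‖⁻¹ * ⟪x, y⟫)) = ⟪x, y⟫ := by
        field_simp
      rw [h3] at h2
      calc Real.cos δ * (‖x‖ * ‖y‖) = ‖x‖ * ‖y‖ * Real.cos δ := by ring
        _ ≤ ⟪x, y⟫ := h2
    have hD₂unit : ∀ b : E d, b ∈ D₂ → b ≠ 0 →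
        ‖(‖b‖⁻¹ • b)‖ = 1 ∧ Real.cos η ≤ ⟪m, ‖b‖⁻¹ • b⟫ := by
      intro b hb hb0
      have hnb : 0 < ‖b‖ := norm_pos_iff.2 hb0
      constructor
      · rw [norm_smul, Real.norm_eq_abs, abs_of_nonneg (inv_nonneg.2 hnb.le),
          inv_mul_cancel₀ hnb.ne']
      · have h1 : Real.cos η * ‖b‖ ≤ ⟪m, b⟫ := hb
        have hsm : ⟪m, ‖b‖⁻¹ • b⟫ = ‖b‖⁻¹ * ⟪m, b⟫ := real_inner_smul_right m b ‖b‖⁻¹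
        rw [hsm]
        have h2 : Real.cos η = ‖b‖⁻¹ * (Real.cos η * ‖b‖) := by field_simp
        rw [h2]
        exact mul_le_mul_of_nonneg_left h1 (inv_nonneg.2 hnb.le)
    -- the crucial estimate for unit vectors near `m`
    have hunit_near : ∀ bu : E d, ‖bu‖ = 1 → Real.cos η ≤ ⟪m, bu⟫ →
        (∀ au : E d, au ∈ A → Real.cos δ ≤ ⟪au, bu⟫) := by
      intro bu hbun hbum au hauA
      have hmm : ⟪m, m⟫ = 1 := by rw [real_inner_self_eq_norm_sq, hmn, one_pow]
      have hs1 : ⟪m, bu⟫ ≤ 1 := by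
        have := real_inner_le_norm m bu
        rwa [hmn, hbun, mul_one] at this
      have hs0 : 0 ≤ ⟪m, bu⟫ := le_trans hcosηpos.le hbum
      have hremn : ‖bu - ⟪m, bu⟫ • m‖ ≤ Real.sin η := by
        have hnorm2 : ‖bu - ⟪m, bu⟫ • m‖ ^ 2 = 1 - ⟪m, bu⟫ ^ 2 := by
          have h8 : ‖⟪m, bu⟫ • m‖ ^ 2 = ⟪m, bu⟫ ^ 2 := by
            rw [norm_smul, hmn, mul_one, Real.norm_eq_abs, sq_abs]
          rw [norm_sub_sq_real, h8, real_inner_smul_right, real_inner_comm bu m, hbun]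
          ring
        have hsq : ‖bu - ⟪m, bu⟫ • m‖ ^ 2 ≤ Real.sin η ^ 2 := by
          rw [hnorm2]
          have h6 : Real.cos η ^ 2 ≤ ⟪m, bu⟫ ^ 2 := pow_le_pow_left₀ hcosηpos.le hbum 2
          linarith only [h6, hpythag]
        calc ‖bu - ⟪m, bu⟫ • m‖ = Real.sqrt (‖bu - ⟪m, bu⟫ • m‖ ^ 2) :=
              (Real.sqrt_sq (norm_nonneg _)).symm
          _ ≤ Real.sqrt (Real.sin η ^ 2) := Real.sqrt_le_sqrt hsq
          _ = Real.sin η := Real.sqrt_sq hsinpos.le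
      have haum : cm ≤ ⟪au, m⟫ := hmin au hauA
      have haun : ‖au‖ = 1 := hauA.1
      have hdecomp : ⟪au, bu⟫ = ⟪m, bu⟫ * ⟪au, m⟫ + ⟪au, bu - ⟪m, bu⟫ • m⟫ := by
        have hsm : ⟪au, ⟪m, bu⟫ • m⟫ = ⟪m, bu⟫ * ⟪au, m⟫ := real_inner_smul_right au m ⟪m, bu⟫
        rw [inner_sub_right, hsm]
        ring
      have hrembound : -(Real.sin η) ≤ ⟪au, bu - ⟪m, bu⟫ • m⟫ := by
        have h1 := neg_le_of_abs_le (abs_real_inner_le_norm au (bu - ⟪m, bu⟫ • m))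
        rw [haun, one_mul] at h1
        linarith only [h1, hremn]
      have hprod : Real.cos η * cm ≤ ⟪m, bu⟫ * ⟪au, m⟫ :=
        mul_le_mul hbum haum hcm_pos.le hs0
      rw [hdecomp]
      have hco : cm * Real.cos η = Real.cos η * cm := by ring
      linarith only [hkeyη, hco, hprod, hrembound]
    have hAA : ∀ a ∈ dualC (coneSet R), ∀ a' ∈ dualC (coneSet R),
        Real.cos δ * (‖a‖ * ‖a'‖) ≤ ⟪a, a'⟫ := by
      intro a ha a' ha'
      rcases eq_or_ne a 0 with rfl | ha0
      · simp
      rcases eq_or_ne a' 0 with rfl | ha0'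
      · simp
      exact hscale a a' ha0 ha0' (F1all _ (hmemA a ha ha0) _ (hmemA a' ha' ha0'))
    have hAB : ∀ a ∈ dualC (coneSet R), ∀ b ∈ D₂, Real.cos δ * (‖a‖ * ‖b‖) ≤ ⟪a, b⟫ := by
      intro a ha b hb
      rcases eq_or_ne a 0 with rfl | ha0
      · simp
      rcases eq_or_ne b 0 with rfl | hb0
      · simp
      obtain ⟨hbn, hbm⟩ := hD₂unit b hb hb0
      exact hscale a b ha0 hb0 (hunit_near _ hbn hbm _ (hmemA a ha ha0))
    have hBB : ∀ b ∈ D₂, ∀ b' ∈ D₂, Real.cos δ * (‖b‖ * ‖b'‖) ≤ ⟪b, b'⟫ := by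
      intro b hb b' hb'
      rcases eq_or_ne b 0 with rfl | hb0
      · simp
      rcases eq_or_ne b' 0 with rfl | hb0'
      · simp
      obtain ⟨hbn, hbm⟩ := hD₂unit b hb hb0
      obtain ⟨hbn', hbm'⟩ := hD₂unit b' hb' hb0'
      apply hscale b b' hb0 hb0'
      -- unit vector estimate for two vectors near `m`
      obtain ⟨bu, hbudef⟩ : ∃ bu : E d, bu = ‖b‖⁻¹ • b := ⟨_, rfl⟩
      obtain ⟨bu', hbudef'⟩ : ∃ bu' : E d, bu' = ‖b'‖⁻¹ • b' := ⟨_, rfl⟩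
      rw [← hbudef] at hbn hbm
      rw [← hbudef'] at hbn' hbm'
      rw [← hbudef, ← hbudef']
      have hmm : ⟪m, m⟫ = 1 := by rw [real_inner_self_eq_norm_sq, hmn, one_pow]
      have hs0 : 0 ≤ ⟪m, bu⟫ := le_trans hcosηpos.le hbm
      have hs0' : 0 ≤ ⟪m, bu'⟫ := le_trans hcosηpos.le hbm'
      have hrem : ∀ cu : E d, ‖cu‖ = 1 → Real.cos η ≤ ⟪m, cu⟫ →
          ‖cu - ⟪m, cu⟫ • m‖ ≤ Real.sin η := by
        intro cu hcun hcum
        have hnorm2 : ‖cu - ⟪m, cu⟫ • m‖ ^ 2 = 1 - ⟪m, cu⟫ ^ 2 := by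
          have h8 : ‖⟪m, cu⟫ • m‖ ^ 2 = ⟪m, cu⟫ ^ 2 := by
            rw [norm_smul, hmn, mul_one, Real.norm_eq_abs, sq_abs]
          rw [norm_sub_sq_real, h8, real_inner_smul_right, real_inner_comm cu m, hcun]
          ring
        have hsq : ‖cu - ⟪m, cu⟫ • m‖ ^ 2 ≤ Real.sin η ^ 2 := by
          rw [hnorm2]
          have h6 : Real.cos η ^ 2 ≤ ⟪m, cu⟫ ^ 2 := pow_le_pow_left₀ hcosηpos.le hcum 2
          linarith only [h6, hpythag]
        calc ‖cu - ⟪m, cu⟫ • m‖ = Real.sqrt (‖cu - ⟪m, cu⟫ • m‖ ^ 2) :=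
              (Real.sqrt_sq (norm_nonneg _)).symm
          _ ≤ Real.sqrt (Real.sin η ^ 2) := Real.sqrt_le_sqrt hsq
          _ = Real.sin η := Real.sqrt_sq hsinpos.le
      have hremb := hrem bu hbn hbm
      have hremb' := hrem bu' hbn' hbm'
      have hexp2 : ⟪bu - ⟪m, bu⟫ • m, bu' - ⟪m, bu'⟫ • m⟫ = ⟪bu, bu'⟫ - ⟪m, bu⟫ * ⟪m, bu'⟫ := by
        simp only [inner_sub_left, inner_sub_right, real_inner_smul_left, real_inner_smul_right,
          hmm]
        rw [real_inner_comm bu m]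
        ring
      have hCS2 : -(‖bu - ⟪m, bu⟫ • m‖ * ‖bu' - ⟪m, bu'⟫ • m‖)
          ≤ ⟪bu - ⟪m, bu⟫ • m, bu' - ⟪m, bu'⟫ • m⟫ :=
        neg_le_of_abs_le (abs_real_inner_le_norm _ _)
      have hprod2 : ‖bu - ⟪m, bu⟫ • m‖ * ‖bu' - ⟪m, bu'⟫ • m‖ ≤ Real.sin η * Real.sin η :=
        mul_le_mul hremb hremb' (norm_nonneg _) hsinpos.le
      have hss : Real.cos η * Real.cos η ≤ ⟪m, bu⟫ * ⟪m, bu'⟫ :=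
        mul_le_mul hbm hbm' hcosηpos.le hs0
      have hcos2 : Real.cos δ ≤ Real.cos η * Real.cos η - Real.sin η * Real.sin η := by
        have h2η : Real.cos δ ≤ Real.cos (2 * η) :=
          Real.cos_le_cos_of_nonneg_of_le_pi (by linarith only [hη0]) hδpi
            (by linarith only [hη2])
        rw [Real.cos_two_mul, pow_two] at h2η
        have hpythag2 : Real.sin η * Real.sin η + Real.cos η * Real.cos η = 1 := by
          rw [← pow_two, ← pow_two]
          exact hpythag
        linarith only [h2η, hpythag2]
      have hfin2 : ⟪bu, bu'⟫ = ⟪m, bu⟫ * ⟪m, bu'⟫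
          + ⟪bu - ⟪m, bu⟫ • m, bu' - ⟪m, bu'⟫ • m⟫ := by
        rw [hexp2]; ring
      rw [hfin2]
      linarith only [hCS2, hprod2, hss, hcos2]
    -- combine the bounds over sums
    have hsum : ∀ s1 ∈ dualC (coneSet R) + D₂, ∀ s2 ∈ dualC (coneSet R) + D₂,
        Real.cos δ * (‖s1‖ * ‖s2‖) ≤ ⟪s1, s2⟫ := by
      intro s1 hs1 s2 hs2
      obtain ⟨a, ha, b, hb, rfl⟩ := hs1
      obtain ⟨a', ha', b', hb', rfl⟩ := hs2
      have t1 := hAA a ha a' ha'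
      have t2 := hAB a ha b' hb'
      have t3 : Real.cos δ * (‖b‖ * ‖a'‖) ≤ ⟪b, a'⟫ := by
        rw [real_inner_comm]
        calc Real.cos δ * (‖b‖ * ‖a'‖) = Real.cos δ * (‖a'‖ * ‖b‖) := by ring
          _ ≤ ⟪a', b⟫ := hAB a' ha' b hb
      have t4 := hBB b hb b' hb'
      have hn : ‖a + b‖ * ‖a' + b'‖ ≤ (‖a‖ + ‖b‖) * (‖a'‖ + ‖b'‖) :=
        mul_le_mul (norm_add_le a b) (norm_add_le a' b') (norm_nonneg _)
          (by positivity)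
      have hinner2 : ⟪a + b, a' + b'⟫ = ⟪a, a'⟫ + ⟪a, b'⟫ + ⟪b, a'⟫ + ⟪b, b'⟫ := by
        rw [inner_add_left, inner_add_right, inner_add_right]
        ring
      have hmono := mul_le_mul_of_nonneg_left hn hcosδ.le
      have hexp3 : Real.cos δ * ((‖a‖ + ‖b‖) * (‖a'‖ + ‖b'‖))
          = Real.cos δ * (‖a‖ * ‖a'‖) + Real.cos δ * (‖a‖ * ‖b'‖)
            + Real.cos δ * (‖b‖ * ‖a'‖) + Real.cos δ * (‖b‖ * ‖b'‖) := by ring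
      rw [hinner2]
      linarith only [t1, t2, t3, t4, hmono, hexp3]
    -- pass to the closure and conclude
    rw [mem_closure_iff_seq_limit] at hu_cl hv_cl
    obtain ⟨su, hsu, hsu_lim⟩ := hu_cl
    obtain ⟨sv, hsv, hsv_lim⟩ := hv_cl
    have hle : ∀ n, Real.cos δ * (‖su n‖ * ‖sv n‖) ≤ ⟪su n, sv n⟫ := fun n =>
      hsum _ (hsu n) _ (hsv n)
    have hlim1 : Filter.Tendsto (fun n => ⟪su n, sv n⟫) Filter.atTop (nhds ⟪u, v⟫) :=
      hsu_lim.inner hsv_lim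
    have hlim2 : Filter.Tendsto (fun n => Real.cos δ * (‖su n‖ * ‖sv n‖)) Filter.atTop
        (nhds (Real.cos δ * (‖u‖ * ‖v‖))) :=
      tendsto_const_nhds.mul (hsu_lim.norm.mul hsv_lim.norm)
    have hfinal : Real.cos δ * (‖u‖ * ‖v‖) ≤ ⟪u, v⟫ :=
      le_of_tendsto_of_tendsto' hlim2 hlim1 hle
    rw [hun, hvn] at hfinal
    have hfinal2 : Real.cos δ ≤ ⟪u, v⟫ := by
      calc Real.cos δ = Real.cos δ * (1 * 1) := by ring
        _ ≤ ⟪u, v⟫ := hfinal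
    exact absurd hinner_lt (not_lt.2 hfinal2)

end Stmt11Aux

/-- every reduced spherical body of thickness greater than `π/2`
is smooth: each boundary point has exactly one supporting hemisphere. -/
theorem stmt11 {d : ℕ} (R : Set (E d)) (hR : Reduced R)
    (hth : Real.pi / 2 < thick R) :
    ∀ p ∈ R \ sInterior R, ∃! k : E d, k ∈ Sph d ∧ R ⊆ Hemi k ∧ p ∈ bdHemi k := by
  rintro p ⟨hpR, hpn⟩
  obtain ⟨k, hkS, hkH, hkb⟩ := exists_support hR.1 hpR hpn
  refine ⟨k, ⟨hkS, hkH, hkb⟩, ?_⟩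
  rintro k' ⟨hk'S, hk'H, hk'b⟩
  exact support_eq hR hth hpR hk'S hk'H hk'b hkS hkH hkb
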